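/- Let f*_t satisfy f*_t(S_t,T_t) = E[f*_{t+1}(S_{t+1},τ_{t+1}) | S_t, T_t] and a*_t be the recursive Riesz representers. Then for each t and any square-integrable direction f̃_t, the Gateaux derivative of (f_t) \mapsto E[m(Z; f̄, ā)] in direction f̃_t, evaluated at the true nuisances, equals E[a*_{t-1}(S_{t-1},T_{t-1}) f̃_t(S_t,τ_t) - a*_t(S_t,T_t) f̃_t(S_t,T_t)], and this quantity is zero (Neyman orthogonality with respect to the regressions). -/

import Mathlib

open MeasureTheory Finset

lemma l2_mul_integrable' {Ω : Type*} [MeasurableSpace Ω] (μ : Measure Ω) [IsFiniteMeasure μ]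
    {f g : Ω → ℝ} (hf : MemLp f 2 μ) (hg : MemLp g 2 μ) :
    Integrable (fun ω => f ω * g ω) μ := by
  have h : (1 : ENNReal) / 1 = 1 / 2 + 1 / 2 := by
    rw [ENNReal.add_halves, one_div_one]
  have := (MemLp.smul (p := 2) (q := 2) (r := 1) hg hf)
  rw [memLp_one_iff_integrable] at this
  exact this

/-- Neyman orthogonality with respect to the regressions: the Gateaux derivative of
`f_t ↦ E[m(Z; f̄, ā)]` in a square-integrable direction `f̃_t`, evaluated at the true nuisances,
equals `E[a*_{t-1}(S_{t-1},T_{t-1}) f̃_t(S_t,τ_t) - a*_t(S_t,T_t) f̃_t(S_t,T_t)]`,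
and this quantity is zero. -/
theorem dynamic_orthogonality_regressions {Ω 𝒮 𝒯 : Type*} [MeasurableSpace Ω]
    [MeasurableSpace 𝒮] [MeasurableSpace 𝒯]
    (μ : Measure Ω) [IsProbabilityMeasure μ]
    (M : ℕ) (hM : 1 ≤ M)
    (S : ℕ → Ω → 𝒮) (T : ℕ → Ω → 𝒯) (Y : Ω → ℝ) (τ : ℕ → 𝒯)
    (hSmeas : ∀ t, Measurable (S t)) (hTmeas : ∀ t, Measurable (T t))
    (fstar astar : ℕ → 𝒮 → 𝒯 → ℝ)
    (hfstarY : ∀ ω, fstar (M + 1) (S (M + 1) ω) (τ (M + 1)) = Y ω)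
    (hastar0 : ∀ s u, astar 0 s u = 1)
    -- the true nested regressions
    (hreg : ∀ t ∈ Icc 1 M,
      (fun ω => fstar t (S t ω) (T t ω)) =ᵐ[μ]
        μ[(fun ω => fstar (t + 1) (S (t + 1) ω) (τ (t + 1))) |
          MeasurableSpace.comap (fun ω => (S t ω, T t ω)) inferInstance])
    -- the true recursive Riesz representers
    (hriesz : ∀ t ∈ Icc 1 M, ∀ g : 𝒮 → 𝒯 → ℝ,
      MemLp (fun ω => g (S t ω) (T t ω)) 2 μ →
      MemLp (fun ω => g (S t ω) (τ t)) 2 μ →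
      (∫ ω, astar (t - 1) (S (t - 1) ω) (T (t - 1) ω) * g (S t ω) (τ t) ∂μ)
        = ∫ ω, astar t (S t ω) (T t ω) * g (S t ω) (T t ω) ∂μ)
    (hfstarL2 : ∀ t, MemLp (fun ω => fstar t (S t ω) (T t ω)) 2 μ
      ∧ MemLp (fun ω => fstar t (S t ω) (τ t)) 2 μ)
    (hastarL2 : ∀ t, MemLp (fun ω => astar t (S t ω) (T t ω)) 2 μ)
    (t₀ : ℕ) (ht₀ : t₀ ∈ Icc 1 M)
    (ftil : 𝒮 → 𝒯 → ℝ)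
    (hftilL2 : MemLp (fun ω => ftil (S t₀ ω) (T t₀ ω)) 2 μ)
    (hftilτL2 : MemLp (fun ω => ftil (S t₀ ω) (τ t₀)) 2 μ) :
    HasDerivAt
      (fun ε : ℝ =>
        ∫ ω,
          ((Function.update fstar t₀ (fun s u => fstar t₀ s u + ε * ftil s u)) 1 (S 1 ω) (τ 1)
            + ∑ t ∈ Icc 1 M, astar t (S t ω) (T t ω)
                * ((Function.update fstar t₀ (fun s u => fstar t₀ s u + ε * ftil s u))
                      (t + 1) (S (t + 1) ω) (τ (t + 1))
                   - (Function.update fstar t₀ (fun s u => fstar t₀ s u + ε * ftil s u))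
                      t (S t ω) (T t ω))) ∂μ)
      (∫ ω, astar (t₀ - 1) (S (t₀ - 1) ω) (T (t₀ - 1) ω) * ftil (S t₀ ω) (τ t₀)
          - astar t₀ (S t₀ ω) (T t₀ ω) * ftil (S t₀ ω) (T t₀ ω) ∂μ)
      0
    ∧ (∫ ω, astar (t₀ - 1) (S (t₀ - 1) ω) (T (t₀ - 1) ω) * ftil (S t₀ ω) (τ t₀)
          - astar t₀ (S t₀ ω) (T t₀ ω) * ftil (S t₀ ω) (T t₀ ω) ∂μ) = 0 := by
  have ht₀' : 1 ≤ t₀ ∧ t₀ ≤ M := by simpa [Finset.mem_Icc] using ht₀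
  -- pointwise formula for the update
  have upd : ∀ (ε : ℝ) (k : ℕ) (s : 𝒮) (u : 𝒯),
      Function.update fstar t₀ (fun s u => fstar t₀ s u + ε * ftil s u) k s u
        = fstar k s u + ε * (if k = t₀ then ftil s u else 0) := by
    intro ε k s u
    rcases eq_or_ne k t₀ with rfl | hk
    · simp
    · simp [Function.update_of_ne hk, hk]
  -- key pointwise affine decomposition
  have key : ∀ (ε : ℝ) (ω : Ω),
      ((Function.update fstar t₀ (fun s u => fstar t₀ s u + ε * ftil s u)) 1 (S 1 ω) (τ 1)
        + ∑ t ∈ Icc 1 M, astar t (S t ω) (T t ω)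
            * ((Function.update fstar t₀ (fun s u => fstar t₀ s u + ε * ftil s u))
                  (t + 1) (S (t + 1) ω) (τ (t + 1))
               - (Function.update fstar t₀ (fun s u => fstar t₀ s u + ε * ftil s u))
                  t (S t ω) (T t ω)))
      = (fstar 1 (S 1 ω) (τ 1)
          + ∑ t ∈ Icc 1 M, astar t (S t ω) (T t ω)
              * (fstar (t + 1) (S (t + 1) ω) (τ (t + 1)) - fstar t (S t ω) (T t ω)))
        + ε * (astar (t₀ - 1) (S (t₀ - 1) ω) (T (t₀ - 1) ω) * ftil (S t₀ ω) (τ t₀)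
            - astar t₀ (S t₀ ω) (T t₀ ω) * ftil (S t₀ ω) (T t₀ ω)) := by
    intro ε ω
    simp only [upd]
    have e1 : ∑ t ∈ Icc 1 M, astar t (S t ω) (T t ω)
        * ((fstar (t + 1) (S (t + 1) ω) (τ (t + 1))
              + ε * (if t + 1 = t₀ then ftil (S (t + 1) ω) (τ (t + 1)) else 0))
           - (fstar t (S t ω) (T t ω)
              + ε * (if t = t₀ then ftil (S t ω) (T t ω) else 0)))
      = ∑ t ∈ Icc 1 M,
          (astar t (S t ω) (T t ω)
              * (fstar (t + 1) (S (t + 1) ω) (τ (t + 1)) - fstar t (S t ω) (T t ω))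
            + ε * (if t = t₀ - 1 then
                astar (t₀ - 1) (S (t₀ - 1) ω) (T (t₀ - 1) ω) * ftil (S t₀ ω) (τ t₀) else 0)
            - ε * (if t = t₀ then
                astar t₀ (S t₀ ω) (T t₀ ω) * ftil (S t₀ ω) (T t₀ ω) else 0)) := by
      refine Finset.sum_congr rfl fun t ht => ?_
      have ht1 : 1 ≤ t := (Finset.mem_Icc.mp ht).1
      by_cases h1 : t + 1 = t₀
      · have h2 : ¬ t = t₀ := by omega
        subst h1
        simp only [Nat.add_sub_cancel]
        simp only [if_pos rfl, if_neg h2, if_true, ite_true, eq_self_iff_true]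
        ring
      · by_cases h2 : t = t₀
        · subst h2
          have hne : ¬ t = t - 1 := by omega
          simp only [if_neg h1, if_pos rfl, if_neg hne, if_true, ite_true, eq_self_iff_true]
          ring
        · have hne : ¬ t = t₀ - 1 := by omega
          simp only [if_neg h1, if_neg h2, if_neg hne]
          ring
    rw [e1, Finset.sum_sub_distrib, Finset.sum_add_distrib, ← Finset.mul_sum, ← Finset.mul_sum,
      Finset.sum_ite_eq' (Icc 1 M) (t₀ - 1), Finset.sum_ite_eq' (Icc 1 M) t₀]
    by_cases h1 : t₀ = 1
    · subst h1
      rw [if_pos rfl, if_neg (by simp), if_pos ht₀]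
      simp only [Nat.sub_self, hastar0]
      ring
    · rw [if_neg (by omega : ¬ (1 : ℕ) = t₀),
        if_pos (Finset.mem_Icc.mpr ⟨by omega, by omega⟩), if_pos ht₀]
      ring
  -- integrability
  have hintA : ∀ t : ℕ, Integrable (fun ω => astar t (S t ω) (T t ω)
      * (fstar (t + 1) (S (t + 1) ω) (τ (t + 1)) - fstar t (S t ω) (T t ω))) μ := by
    intro t
    have h1 := l2_mul_integrable' μ (hastarL2 t) (hfstarL2 (t + 1)).2
    have h2 := l2_mul_integrable' μ (hastarL2 t) (hfstarL2 t).1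
    simpa [mul_sub, Pi.sub_def] using h1.sub h2
  have hbase : Integrable (fun ω => fstar 1 (S 1 ω) (τ 1)
      + ∑ t ∈ Icc 1 M, astar t (S t ω) (T t ω)
          * (fstar (t + 1) (S (t + 1) ω) (τ (t + 1)) - fstar t (S t ω) (T t ω))) μ :=
    ((hfstarL2 1).2.integrable one_le_two).add (integrable_finset_sum _ fun t _ => hintA t)
  have hd1 : Integrable (fun ω =>
      astar (t₀ - 1) (S (t₀ - 1) ω) (T (t₀ - 1) ω) * ftil (S t₀ ω) (τ t₀)) μ :=
    l2_mul_integrable' μ (hastarL2 (t₀ - 1)) hftilτL2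
  have hd2 : Integrable (fun ω =>
      astar t₀ (S t₀ ω) (T t₀ ω) * ftil (S t₀ ω) (T t₀ ω)) μ :=
    l2_mul_integrable' μ (hastarL2 t₀) hftilL2
  have hder : Integrable (fun ω =>
      astar (t₀ - 1) (S (t₀ - 1) ω) (T (t₀ - 1) ω) * ftil (S t₀ ω) (τ t₀)
        - astar t₀ (S t₀ ω) (T t₀ ω) * ftil (S t₀ ω) (T t₀ ω)) μ := hd1.sub hd2
  have heq : ∀ ε : ℝ,
      (∫ ω,
          ((Function.update fstar t₀ (fun s u => fstar t₀ s u + ε * ftil s u)) 1 (S 1 ω) (τ 1)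
            + ∑ t ∈ Icc 1 M, astar t (S t ω) (T t ω)
                * ((Function.update fstar t₀ (fun s u => fstar t₀ s u + ε * ftil s u))
                      (t + 1) (S (t + 1) ω) (τ (t + 1))
                   - (Function.update fstar t₀ (fun s u => fstar t₀ s u + ε * ftil s u))
                      t (S t ω) (T t ω))) ∂μ)
      = (∫ ω, (fstar 1 (S 1 ω) (τ 1)
          + ∑ t ∈ Icc 1 M, astar t (S t ω) (T t ω)
              * (fstar (t + 1) (S (t + 1) ω) (τ (t + 1)) - fstar t (S t ω) (T t ω))) ∂μ)
        + ε * (∫ ω, astar (t₀ - 1) (S (t₀ - 1) ω) (T (t₀ - 1) ω) * ftil (S t₀ ω) (τ t₀)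
            - astar t₀ (S t₀ ω) (T t₀ ω) * ftil (S t₀ ω) (T t₀ ω) ∂μ) := by
    intro ε
    rw [integral_congr_ae (ae_of_all μ (key ε)),
      integral_add hbase (hder.const_mul ε), integral_const_mul]
  constructor
  · simp only [heq]
    exact (hasDerivAt_mul_const _).const_add _
  · rw [integral_sub hd1 hd2, hriesz t₀ ht₀ ftil hftilL2 hftilτL2, sub_self]
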